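/- arXiv:1702.01666 — 4 statements merged into one kernel-verified Lean document; each statement's English description precedes it below -/
import Mathlib

section
/- For every integer α ≥ 2, every constant c > 0 and every δ ∈ (0,1/2), there exists a constant C > 0 (depending only on α, c, δ) such that for every alphabet size k ≥ 2, every distribution q on A = {1,…,k} satisfying min_i q_i ≥ k^{−c}, and every n ≥ k^C, there exists a function f : A^n → ℝ that is a (δ, 0.3)-estimator of D_α(·‖q) on the set of all distributions on A. -/
open Finset Real

/-- `p` is a probability distribution on `Fin k`. -/
def IsDist {k : ℕ} (p : Fin k → ℝ) : Prop := (∀ i, 0 ≤ p i) ∧ ∑ i, p i = 1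

/-- Rényi divergence of order `α` of `p` from `q`. -/
noncomputable def renyiDiv {k : ℕ} (α : ℝ) (p q : Fin k → ℝ) : ℝ :=
  (1 / (α - 1)) * Real.log (∑ i, p i ^ α * q i ^ (1 - α))

/-- Probability, under `n` i.i.d. samples from `p`, of the event `E`. -/
noncomputable def iidProb {k : ℕ} (n : ℕ) (p : Fin k → ℝ)
    (E : Set (Fin n → Fin k)) : ℝ :=
  ∑ x : Fin n → Fin k, Set.indicator E (fun y => ∏ j, p (y j)) x

/-- `f` is a `(δ, ε)`-estimator of the Rényi `α`-divergence to `q`,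
on the set of all distributions on `Fin k`. -/
def IsEstimator {k : ℕ} (n : ℕ) (α δ ε : ℝ) (q : Fin k → ℝ)
    (f : (Fin n → Fin k) → ℝ) : Prop :=
  ∀ p : Fin k → ℝ, IsDist p →
    iidProb n p {x | δ < |f x - renyiDiv α p q|} < ε

/-! ### Auxiliary probabilistic lemmas -/

section prob
variable {k n : ℕ} (p : Fin k → ℝ)

/-- Expectation of a product of single-coordinate functions factorizes. -/
lemma exp_factor (F : Fin n → Fin k → ℝ) :
    ∑ x : Fin n → Fin k, ∏ j, F j (x j) = ∏ j, ∑ a, F j a :=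
  (Fintype.prod_sum F).symm

lemma exp_single (hp : ∑ a, p a = 1) (j : Fin n) (g : Fin k → ℝ) :
    ∑ x : Fin n → Fin k, (∏ m, p (x m)) * g (x j) = ∑ a, p a * g a := by
  have h := exp_factor (fun m a => p a * (if m = j then g a else 1))
  have h1 : ∀ x : Fin n → Fin k,
      (∏ m, p (x m) * (if m = j then g (x m) else 1)) = (∏ m, p (x m)) * g (x j) := by
    intro x
    rw [Finset.prod_mul_distrib]
    congr 1
    simp
  have h2 : (∏ m : Fin n, ∑ a, p a * (if m = j then g a else 1)) = ∑ a, p a * g a := by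
    have : ∀ m : Fin n, (∑ a, p a * (if m = j then g a else 1)) =
        if m = j then (∑ a, p a * g a) else 1 := by
      intro m
      by_cases hm : m = j <;> simp [hm, hp]
    rw [Finset.prod_congr rfl (fun m _ => this m)]
    simp
  simp only [h1] at h
  rw [h, h2]

lemma exp_pair (hp : ∑ a, p a = 1) (j j' : Fin n) (hjj : j ≠ j') (g h : Fin k → ℝ) :
    ∑ x : Fin n → Fin k, (∏ m, p (x m)) * (g (x j) * h (x j')) =
      (∑ a, p a * g a) * (∑ a, p a * h a) := by
  have hfac := exp_factor (fun m a => p a * (if m = j then g a else if m = j' then h a else 1))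
  have h1 : ∀ x : Fin n → Fin k,
      (∏ m, p (x m) * (if m = j then g (x m) else if m = j' then h (x m) else 1)) =
      (∏ m, p (x m)) * (g (x j) * h (x j')) := by
    intro x
    rw [Finset.prod_mul_distrib]
    congr 1
    have hj : j ∈ (univ : Finset (Fin n)) := mem_univ _
    rw [← Finset.mul_prod_erase _ _ hj]
    have hj' : j' ∈ (univ : Finset (Fin n)).erase j := by
      simp [hjj.symm]
    rw [← Finset.mul_prod_erase _ _ hj']
    have : ∀ m ∈ ((univ : Finset (Fin n)).erase j).erase j',
        (if m = j then g (x m) else if m = j' then h (x m) else 1) = 1 := by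
      intro m hm
      simp only [mem_erase] at hm
      simp [hm.1, hm.2.1]
    rw [Finset.prod_eq_one this]
    simp [hjj, hjj.symm]
  have h2 : (∏ m : Fin n, ∑ a, p a * (if m = j then g a else if m = j' then h a else 1)) =
      (∑ a, p a * g a) * (∑ a, p a * h a) := by
    have key : ∀ m : Fin n, (∑ a, p a * (if m = j then g a else if m = j' then h a else 1)) =
        if m = j then (∑ a, p a * g a) else if m = j' then (∑ a, p a * h a) else 1 := by
      intro m
      by_cases hm : m = j
      · simp [hm]
      · by_cases hm' : m = j' <;> simp [hm, hm', hp]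
    rw [Finset.prod_congr rfl (fun m _ => key m)]
    have hj : j ∈ (univ : Finset (Fin n)) := mem_univ _
    rw [← Finset.mul_prod_erase _ _ hj]
    have hj' : j' ∈ (univ : Finset (Fin n)).erase j := by simp [hjj.symm]
    rw [← Finset.mul_prod_erase _ _ hj']
    have : ∀ m ∈ ((univ : Finset (Fin n)).erase j).erase j',
        (if m = j then (∑ a, p a * g a) else if m = j' then (∑ a, p a * h a) else 1) = 1 := by
      intro m hm
      simp only [mem_erase] at hm
      simp [hm.1, hm.2.1]
    rw [Finset.prod_eq_one this]
    simp [hjj, hjj.symm]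
  simp only [h1] at hfac
  rw [hfac, h2]

end prob

section var
variable {k n : ℕ} (p : Fin k → ℝ)

noncomputable def dev (p : Fin k → ℝ) (i a : Fin k) : ℝ := (if a = i then (1:ℝ) else 0) - p i

lemma dev_mean (hp : ∑ a, p a = 1) (i : Fin k) : ∑ a, p a * dev p i a = 0 := by
  simp [dev, mul_sub, Finset.sum_sub_distrib, ← Finset.sum_mul, hp, mul_ite]

lemma dev_sq_mean (hp0 : ∀ a, 0 ≤ p a) (hp : ∑ a, p a = 1) (i : Fin k) :
    ∑ a, p a * (dev p i a * dev p i a) ≤ p i := by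
  have key : ∀ a : Fin k, p a * (dev p i a * dev p i a)
      = p a * (if a = i then (1:ℝ) else 0) - 2 * p i * (p a * (if a = i then (1:ℝ) else 0))
        + p i ^ 2 * p a := by
    intro a
    by_cases ha : a = i <;> simp [dev, ha] <;> ring
  rw [Finset.sum_congr rfl (fun a _ => key a)]
  rw [Finset.sum_add_distrib, Finset.sum_sub_distrib, ← Finset.mul_sum, ← Finset.mul_sum]
  have h1 : ∑ a, p a * (if a = i then (1:ℝ) else 0) = p i := by simp [mul_ite]
  rw [h1, hp]
  nlinarith [hp0 i, sq_nonneg (p i)]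

lemma exp_sum_sq_dev (hp0 : ∀ a, 0 ≤ p a) (hp : ∑ a, p a = 1) (i : Fin k) :
    ∑ x : Fin n → Fin k, (∏ m, p (x m)) * (∑ j, dev p i (x j)) ^ 2 ≤ n * p i := by
  have expand : ∀ x : Fin n → Fin k, (∑ j, dev p i (x j)) ^ 2
      = ∑ j, ∑ j', dev p i (x j) * dev p i (x j') := by
    intro x; rw [sq, Finset.sum_mul_sum]
  calc ∑ x : Fin n → Fin k, (∏ m, p (x m)) * (∑ j, dev p i (x j)) ^ 2
      = ∑ j : Fin n, ∑ j' : Fin n, ∑ x : Fin n → Fin k,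
          (∏ m, p (x m)) * (dev p i (x j) * dev p i (x j')) := by
        have step1 : ∑ x : Fin n → Fin k, (∏ m, p (x m)) * (∑ j, dev p i (x j)) ^ 2
            = ∑ x : Fin n → Fin k, ∑ j : Fin n, ∑ j' : Fin n,
              (∏ m, p (x m)) * (dev p i (x j) * dev p i (x j')) := by
          refine Finset.sum_congr rfl fun x _ => ?_
          rw [expand x, Finset.mul_sum]
          exact Finset.sum_congr rfl fun j _ => Finset.mul_sum _ _ _
        rw [step1, Finset.sum_comm]
        exact Finset.sum_congr rfl fun j _ => Finset.sum_comm
    _ = ∑ j : Fin n, ∑ j' : Fin n,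
          (if j = j' then ∑ a, p a * (dev p i a * dev p i a) else 0) := by
        refine Finset.sum_congr rfl fun j _ => Finset.sum_congr rfl fun j' _ => ?_
        by_cases hjj : j = j'
        · subst hjj
          simp only [if_pos rfl]
          exact exp_single p hp j (fun a => dev p i a * dev p i a)
        · rw [if_neg hjj]
          rw [exp_pair p hp j j' hjj (dev p i) (dev p i), dev_mean p hp i]
          ring
    _ ≤ ∑ j : Fin n, ∑ j' : Fin n, (if j = j' then p i else 0) := by
        apply Finset.sum_le_sum; intro j _
        apply Finset.sum_le_sum; intro j' _
        by_cases hjj : j = j' <;> simp [hjj]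
        exact dev_sq_mean p hp0 hp i
    _ = n * p i := by simp [Finset.sum_ite_eq]

end var

section mono
variable {k n : ℕ}

lemma iidProb_mono (p : Fin k → ℝ) (hp0 : ∀ a, 0 ≤ p a) {E E' : Set (Fin n → Fin k)}
    (h : E ⊆ E') : iidProb n p E ≤ iidProb n p E' := by
  apply Finset.sum_le_sum
  intro x _
  exact Set.indicator_le_indicator_of_subset h
    (fun y => Finset.prod_nonneg fun m _ => hp0 _) x

lemma iidProb_markov (p : Fin k → ℝ) (hp0 : ∀ a, 0 ≤ p a)
    (T : (Fin n → Fin k) → ℝ) (hT : ∀ x, 0 ≤ T x) (s : ℝ) (hs : 0 < s) :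
    iidProb n p {x | s < T x} ≤ (∑ x : Fin n → Fin k, (∏ m, p (x m)) * T x) / s := by
  rw [le_div_iff₀ hs]
  unfold iidProb
  rw [Finset.sum_mul]
  apply Finset.sum_le_sum
  intro x _
  by_cases hx : x ∈ {y : Fin n → Fin k | s < T y}
  · rw [Set.indicator_of_mem hx]
    have hw : 0 ≤ ∏ m, p (x m) := Finset.prod_nonneg fun m _ => hp0 _
    have : s ≤ T x := le_of_lt hx
    calc (∏ j, p (x j)) * s ≤ (∏ j, p (x j)) * T x :=
          mul_le_mul_of_nonneg_left this hw
      _ = (∏ m, p (x m)) * T x := rfl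
  · rw [Set.indicator_of_notMem hx]
    simp only [zero_mul]
    exact mul_nonneg (Finset.prod_nonneg fun m _ => hp0 _) (hT x)

end mono

/-! ### Auxiliary analytic lemmas -/

lemma abs_pow_sub_pow_le' {x y : ℝ} (hx0 : 0 ≤ x) (hx1 : x ≤ 1) (hy0 : 0 ≤ y) (hy1' : y ≤ 1) :
    ∀ m : ℕ, |x ^ m - y ^ m| ≤ m * |x - y| := by
  intro m; induction m with
  | zero => simp
  | succ m ih =>
    have hid : x ^ (m+1) - y ^ (m+1) = x ^ m * (x - y) + y * (x ^ m - y ^ m) := by ring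
    have h1 : |x ^ m * (x - y)| ≤ |x - y| := by
      rw [abs_mul]
      have : |x ^ m| ≤ 1 := by
        rw [abs_of_nonneg (pow_nonneg hx0 m)]
        exact pow_le_one₀ hx0 hx1
      nlinarith [abs_nonneg (x - y)]
    have h2 : |y * (x ^ m - y ^ m)| ≤ |y| * (m * |x - y|) := by
      rw [abs_mul]
      exact mul_le_mul_of_nonneg_left ih (abs_nonneg y)
    have hy1 : |y| ≤ 1 := by rw [abs_of_nonneg hy0]; exact hy1'
    calc |x ^ (m+1) - y ^ (m+1)| ≤ |x ^ m * (x - y)| + |y * (x ^ m - y ^ m)| := by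
          rw [hid]; exact abs_add_le _ _
      _ ≤ |x - y| + m * |x - y| := by
          have h3 : |y| * (↑m * |x - y|) ≤ ↑m * |x - y| :=
            mul_le_of_le_one_left (by positivity) hy1
          linarith
      _ = (↑(m+1) : ℝ) * |x - y| := by push_cast; ring

lemma abs_log_sub_log_le {a b : ℝ} (ha : 1 ≤ a) (hb : 1 ≤ b) :
    |Real.log a - Real.log b| ≤ |a - b| := by
  wlog h : b ≤ a
  · rw [abs_sub_comm, abs_sub_comm a b]; exact this hb ha (le_of_not_ge h)
  have ha0 : 0 < a := lt_of_lt_of_le one_pos ha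
  have hb0 : 0 < b := lt_of_lt_of_le one_pos hb
  have hlog : Real.log b ≤ Real.log a := Real.log_le_log hb0 h
  rw [abs_of_nonneg (sub_nonneg.2 hlog), abs_of_nonneg (sub_nonneg.2 h),
    ← Real.log_div (ne_of_gt ha0) (ne_of_gt hb0)]
  calc Real.log (a/b) ≤ a/b - 1 := Real.log_le_sub_one_of_pos (div_pos ha0 hb0)
    _ = (a - b)/b := by field_simp
    _ ≤ a - b := div_le_self (sub_nonneg.2 h) hb

lemma S_ge_one {k : ℕ} (α : ℕ) (q r : Fin k → ℝ)
    (hq0 : ∀ i, 0 < q i) (hqs : ∑ i, q i = 1)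
    (hr0 : ∀ i, 0 ≤ r i) (hrs : ∑ i, r i = 1) :
    1 ≤ ∑ i, r i ^ (α:ℝ) * q i ^ (1 - (α:ℝ)) := by
  have hterm : ∀ i, r i ^ (α:ℝ) * q i ^ (1 - (α:ℝ)) = q i * (r i / q i) ^ α := by
    intro i
    rw [show (1 - (α:ℝ)) = 1 + (-(α:ℝ)) by ring, Real.rpow_add (hq0 i),
      Real.rpow_natCast, Real.rpow_one, Real.rpow_neg (hq0 i).le, Real.rpow_natCast,
      div_pow]
    field_simp
  rw [Finset.sum_congr rfl (fun i _ => hterm i)]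
  have hjensen := (convexOn_pow (𝕜 := ℝ) α).map_sum_le
    (t := Finset.univ) (w := q) (p := fun i => r i / q i)
    (fun i _ => (hq0 i).le) hqs (fun i _ => by
      exact Set.mem_Ici.2 (div_nonneg (hr0 i) (hq0 i).le))
  have hsum : ∑ i, q i • (r i / q i) = 1 := by
    rw [← hrs]
    exact Finset.sum_congr rfl fun i _ => by
      rw [smul_eq_mul, mul_div_cancel₀ _ (ne_of_gt (hq0 i))]
  rw [hsum] at hjensen
  simpa using hjensen

lemma S_diff_le {k : ℕ} (α : ℕ) (q r s : Fin k → ℝ) (M : ℝ)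
    (hq0 : ∀ i, 0 < q i) (hM : ∀ i, q i ^ (1 - (α:ℝ)) ≤ M)
    (hr0 : ∀ i, 0 ≤ r i) (hr1 : ∀ i, r i ≤ 1)
    (hs0 : ∀ i, 0 ≤ s i) (hs1 : ∀ i, s i ≤ 1) :
    |(∑ i, r i ^ (α:ℝ) * q i ^ (1-(α:ℝ))) - ∑ i, s i ^ (α:ℝ) * q i ^ (1-(α:ℝ))|
      ≤ α * M * ∑ i, |r i - s i| := by
  rw [← Finset.sum_sub_distrib]
  calc |∑ i, (r i ^ (α:ℝ) * q i ^ (1-(α:ℝ)) - s i ^ (α:ℝ) * q i ^ (1-(α:ℝ)))|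
      ≤ ∑ i, |r i ^ (α:ℝ) * q i ^ (1-(α:ℝ)) - s i ^ (α:ℝ) * q i ^ (1-(α:ℝ))| :=
        Finset.abs_sum_le_sum_abs _ _
    _ ≤ ∑ i, α * M * |r i - s i| := by
        apply Finset.sum_le_sum
        intro i _
        have hqb : 0 < q i ^ (1-(α:ℝ)) := Real.rpow_pos_of_pos (hq0 i) _
        have key : |r i ^ (α:ℝ) - s i ^ (α:ℝ)| ≤ α * |r i - s i| := by
          rw [Real.rpow_natCast, Real.rpow_natCast]
          exact abs_pow_sub_pow_le' (hr0 i) (hr1 i) (hs0 i) (hs1 i) α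
        calc |r i ^ (α:ℝ) * q i ^ (1-(α:ℝ)) - s i ^ (α:ℝ) * q i ^ (1-(α:ℝ))|
            = |r i ^ (α:ℝ) - s i ^ (α:ℝ)| * q i ^ (1-(α:ℝ)) := by
              rw [← sub_mul, abs_mul, abs_of_nonneg hqb.le]
          _ ≤ (α * |r i - s i|) * M :=
              mul_le_mul key (hM i) hqb.le (by positivity)
          _ = α * M * |r i - s i| := by ring
    _ = α * M * ∑ i, |r i - s i| := by rw [Finset.mul_sum]

theorem renyi_close {k : ℕ} (α : ℕ) (hα : 2 ≤ α) (q r s : Fin k → ℝ) (M : ℝ)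
    (hq0 : ∀ i, 0 < q i) (hqs : ∑ i, q i = 1) (hM : ∀ i, q i ^ (1 - (α:ℝ)) ≤ M)
    (hr0 : ∀ i, 0 ≤ r i) (hrs : ∑ i, r i = 1)
    (hs0 : ∀ i, 0 ≤ s i) (hss : ∑ i, s i = 1) :
    |renyiDiv (α:ℝ) r q - renyiDiv (α:ℝ) s q| ≤ α * M * ∑ i, |r i - s i| := by
  have ha2 : (2:ℝ) ≤ (α:ℝ) := by exact_mod_cast hα
  have hr1 : ∀ i, r i ≤ 1 := fun i => by
    rw [← hrs]; exact Finset.single_le_sum (fun j _ => hr0 j) (Finset.mem_univ i)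
  have hs1 : ∀ i, s i ≤ 1 := fun i => by
    rw [← hss]; exact Finset.single_le_sum (fun j _ => hs0 j) (Finset.mem_univ i)
  have hSr : 1 ≤ ∑ i, r i ^ (α:ℝ) * q i ^ (1 - (α:ℝ)) := S_ge_one α q r hq0 hqs hr0 hrs
  have hSs : 1 ≤ ∑ i, s i ^ (α:ℝ) * q i ^ (1 - (α:ℝ)) := S_ge_one α q s hq0 hqs hs0 hss
  unfold renyiDiv
  rw [← mul_sub, abs_mul]
  have hfrac : |1 / ((α:ℝ) - 1)| ≤ 1 := by
    have hpos : (0:ℝ) < (α:ℝ) - 1 := by linarith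
    rw [abs_of_pos (div_pos one_pos hpos), div_le_one hpos]
    linarith
  calc |1 / ((α:ℝ) - 1)| * |Real.log (∑ i, r i ^ (α:ℝ) * q i ^ (1 - (α:ℝ)))
        - Real.log (∑ i, s i ^ (α:ℝ) * q i ^ (1 - (α:ℝ)))|
      ≤ 1 * |(∑ i, r i ^ (α:ℝ) * q i ^ (1 - (α:ℝ))) - ∑ i, s i ^ (α:ℝ) * q i ^ (1 - (α:ℝ))| :=
        mul_le_mul hfrac (abs_log_sub_log_le hSr hSs) (abs_nonneg _) zero_le_one
    _ ≤ α * M * ∑ i, |r i - s i| := by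
        rw [one_mul]
        exact S_diff_le α q r s M hq0 hM hr0 hr1 hs0 hs1

set_option maxHeartbeats 1000000 in
/-- polynomial sample complexity for non-negligible
reference probabilities. -/
theorem poly_complexity_nonnegligible_reference :
    ∀ α : ℕ, 2 ≤ α → ∀ c : ℝ, 0 < c →
    ∀ δ : ℝ, δ ∈ Set.Ioo (0 : ℝ) (1/2) →
    ∃ C : ℝ, 0 < C ∧
      ∀ k : ℕ, 2 ≤ k →
      ∀ q : Fin k → ℝ, IsDist q → (∀ i, (k : ℝ) ^ (-c) ≤ q i) →
      ∀ n : ℕ, (k : ℝ) ^ C ≤ (n : ℝ) →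
      ∃ f : (Fin n → Fin k) → ℝ, IsEstimator n (α : ℝ) δ (0.3) q f := by
  intro α hα c hc δ hδ
  obtain ⟨hδ0, hδ2⟩ := hδ
  have ha2 : (2:ℝ) ≤ (α:ℝ) := by exact_mod_cast hα
  have hratio : (1:ℝ) ≤ 4 * (α:ℝ)^2 / δ^2 := by
    rw [le_div_iff₀ (by positivity)]
    nlinarith
  set L : ℝ := Real.logb 2 (4 * (α:ℝ)^2 / δ^2) with hLdef
  have hL0 : 0 ≤ L := Real.logb_nonneg (by norm_num) hratio
  refine ⟨2*c*((α:ℝ)-1) + 1 + L, by nlinarith, ?_⟩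
  intro k hk q hqd hqmin n hn
  have hkn : (0:ℕ) < k := by omega
  have hk0 : (0:ℝ) < k := by exact_mod_cast hkn
  have hk2 : (2:ℝ) ≤ k := by exact_mod_cast hk
  have hq0 : ∀ i, 0 < q i := fun i => lt_of_lt_of_le (Real.rpow_pos_of_pos hk0 _) (hqmin i)
  have hqs : ∑ i, q i = 1 := hqd.2
  set M : ℝ := (k:ℝ) ^ (c*((α:ℝ)-1)) with hMdef
  have hM0 : 0 < M := Real.rpow_pos_of_pos hk0 _
  have haM : 0 < (α:ℝ) * M := mul_pos (by linarith) hM0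
  set t : ℝ := δ / ((α:ℝ) * M) with htdef
  have ht0 : 0 < t := div_pos hδ0 haM
  have hC0 : 0 ≤ 2*c*((α:ℝ)-1) + 1 + L := by nlinarith
  have hn1 : (1:ℝ) ≤ (n:ℝ) :=
    le_trans (Real.one_le_rpow (by linarith : (1:ℝ) ≤ k) hC0) hn
  have hnn : (0:ℝ) < (n:ℝ) := by linarith
  have hqM : ∀ i, q i ^ (1 - (α:ℝ)) ≤ M := by
    intro i
    have h1 : q i ^ (1-(α:ℝ)) ≤ ((k:ℝ)^(-c)) ^ (1-(α:ℝ)) :=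
      Real.rpow_le_rpow_of_nonpos (Real.rpow_pos_of_pos hk0 _) (hqmin i) (by linarith)
    have h2 : ((k:ℝ)^(-c)) ^ (1-(α:ℝ)) = M := by
      rw [← Real.rpow_mul hk0.le, hMdef]
      congr 1
      ring
    rw [h2] at h1; exact h1
  have hM2 : M^2 = (k:ℝ)^(2*c*((α:ℝ)-1)) := by
    rw [hMdef, ← Real.rpow_natCast ((k:ℝ)^(c*((α:ℝ)-1))) 2, ← Real.rpow_mul hk0.le]
    congr 1
    push_cast
    ring
  -- the estimator: plug-in with empirical distribution
  set phat : (Fin n → Fin k) → Fin k → ℝ :=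
    fun x i => (∑ j, if x j = i then (1:ℝ) else 0) / n with hphatdef
  refine ⟨fun x => renyiDiv (α:ℝ) (phat x) q, ?_⟩
  intro p hp
  obtain ⟨hp0, hps⟩ := hp
  have hphat0 : ∀ x : Fin n → Fin k, ∀ i, 0 ≤ phat x i := by
    intro x i
    apply div_nonneg _ (le_of_lt hnn)
    apply Finset.sum_nonneg
    intro j _
    split_ifs <;> norm_num
  have hphats : ∀ x : Fin n → Fin k, ∑ i, phat x i = 1 := by
    intro x
    simp only [hphatdef]
    rw [← Finset.sum_div, Finset.sum_comm]
    have e1 : ∀ j : Fin n, ∑ i, (if x j = i then (1:ℝ) else 0) = 1 := by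
      intro j; simp
    rw [Finset.sum_congr rfl fun j _ => e1 j, Finset.sum_const, Finset.card_univ,
      Fintype.card_fin, nsmul_eq_mul, mul_one]
    exact div_self (ne_of_gt hnn)
  set T : (Fin n → Fin k) → ℝ := fun x => ∑ i, (phat x i - p i)^2 with hTdef
  have hT0 : ∀ x, 0 ≤ T x := fun x => Finset.sum_nonneg fun i _ => sq_nonneg _
  -- the bad event is contained in the event that the empirical L² error is large
  have hsub : {x : Fin n → Fin k | δ < |renyiDiv (α:ℝ) (phat x) q - renyiDiv (α:ℝ) p q|}
      ⊆ {x : Fin n → Fin k | t^2/k < T x} := by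
    intro x hx
    simp only [Set.mem_setOf_eq] at hx ⊢
    by_contra hcon
    push_neg at hcon
    have hCS : (∑ i, |phat x i - p i|)^2 ≤ k * T x := by
      have h := sq_sum_le_card_mul_sum_sq
        (s := (univ : Finset (Fin k))) (f := fun i => |phat x i - p i|)
      simpa [sq_abs, hTdef, Finset.card_univ] using h
    have hsum : ∑ i, |phat x i - p i| ≤ t := by
      have h2 : (∑ i, |phat x i - p i|)^2 ≤ t^2 := by
        calc (∑ i, |phat x i - p i|)^2 ≤ k * T x := hCS
          _ ≤ k * (t^2/k) := mul_le_mul_of_nonneg_left hcon hk0.le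
          _ = t^2 := by field_simp
      nlinarith [Finset.sum_nonneg (fun i (_ : i ∈ (univ : Finset (Fin k))) =>
        abs_nonneg (phat x i - p i))]
    have hclose := renyi_close α hα q (phat x) p M hq0 hqs hqM
      (hphat0 x) (hphats x) hp0 hps
    have hle : |renyiDiv (α:ℝ) (phat x) q - renyiDiv (α:ℝ) p q| ≤ δ := by
      refine le_trans hclose ?_
      calc (α:ℝ) * M * ∑ i, |phat x i - p i| ≤ (α:ℝ) * M * t :=
            mul_le_mul_of_nonneg_left hsum haM.le
        _ = δ := by rw [htdef]; field_simp
    linarith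
  have hts : 0 < t^2/k := div_pos (by positivity) hk0
  have hmarkov := iidProb_markov p hp0 T hT0 (t^2/k) hts
  -- the expectation bound
  have hET : ∑ x : Fin n → Fin k, (∏ m, p (x m)) * T x ≤ 1/(n:ℝ) := by
    have hdev : ∀ (x : Fin n → Fin k) (i : Fin k),
        phat x i - p i = (∑ j, dev p i (x j))/(n:ℝ) := by
      intro x i
      have e : ∑ j, dev p i (x j)
          = (∑ j, if x j = i then (1:ℝ) else 0) - (n:ℝ) * p i := by
        unfold dev
        rw [Finset.sum_sub_distrib, Finset.sum_const, Finset.card_univ, Fintype.card_fin,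
          nsmul_eq_mul]
      rw [e]
      simp only [hphatdef]
      field_simp
    have hTx : ∀ x, T x = ∑ i, (∑ j, dev p i (x j))^2 / (n:ℝ)^2 := by
      intro x
      simp only [hTdef]
      refine Finset.sum_congr rfl fun i _ => ?_
      rw [hdev x i, div_pow]
    have step1 : ∑ x : Fin n → Fin k, (∏ m, p (x m)) * T x
        = ∑ i : Fin k, (∑ x : Fin n → Fin k,
            (∏ m, p (x m)) * (∑ j, dev p i (x j))^2) / (n:ℝ)^2 := by
      have e1 : ∀ x : Fin n → Fin k, (∏ m, p (x m)) * T x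
          = ∑ i, ((∏ m, p (x m)) * (∑ j, dev p i (x j))^2) / (n:ℝ)^2 := by
        intro x
        rw [hTx x, Finset.mul_sum]
        exact Finset.sum_congr rfl fun i _ => by rw [mul_div_assoc]
      rw [Finset.sum_congr rfl fun x _ => e1 x, Finset.sum_comm]
      exact Finset.sum_congr rfl fun i _ => by rw [Finset.sum_div]
    rw [step1]
    calc ∑ i : Fin k, (∑ x : Fin n → Fin k,
            (∏ m, p (x m)) * (∑ j, dev p i (x j))^2) / (n:ℝ)^2
        ≤ ∑ i : Fin k, ((n:ℝ) * p i)/(n:ℝ)^2 := by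
          apply Finset.sum_le_sum
          intro i _
          have := exp_sum_sq_dev p hp0 hps (n := n) i
          gcongr
      _ = 1/(n:ℝ) := by
          rw [← Finset.sum_div, ← Finset.mul_sum, hps, mul_one, sq]
          field_simp
  -- the key numeric inequality
  have hkey : 4*(k:ℝ) ≤ (n:ℝ) * t^2 := by
    set B := (k:ℝ)^(2*c*((α:ℝ)-1)) with hB
    have hB0 : 0 < B := Real.rpow_pos_of_pos hk0 _
    set K1 := (k:ℝ)^((1:ℝ)+L) with hK1d
    have hK10 : 0 < K1 := Real.rpow_pos_of_pos hk0 _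
    have hBK : (k:ℝ)^(2*c*((α:ℝ)-1) + 1 + L) = B * K1 := by
      rw [hB, hK1d, ← Real.rpow_add hk0]
      congr 1; ring
    have h2L : (2:ℝ)^L = 4*(α:ℝ)^2/δ^2 :=
      Real.rpow_logb (by norm_num) (by norm_num) (by positivity)
    have hK1 : 4*(α:ℝ)^2/δ^2 * k ≤ K1 := by
      have e1 : K1 = (k:ℝ) * (k:ℝ)^L := by
        rw [hK1d, Real.rpow_add hk0, Real.rpow_one]
      have e2 : (2:ℝ)^L ≤ (k:ℝ)^L := Real.rpow_le_rpow (by norm_num) hk2 hL0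
      rw [e1, ← h2L]
      calc (2:ℝ)^L * k ≤ (k:ℝ)^L * k := mul_le_mul_of_nonneg_right e2 hk0.le
        _ = k * (k:ℝ)^L := mul_comm _ _
    have ht2 : t^2 * ((α:ℝ)^2 * B) = δ^2 := by
      rw [htdef, ← hM2]
      field_simp
    have h5 : B * K1 ≤ (n:ℝ) := le_trans (le_of_eq hBK.symm) hn
    have e1' : B * K1 * t^2 * (α:ℝ)^2 ≤ (n:ℝ) * t^2 * (α:ℝ)^2 := by
      have h6 := mul_le_mul_of_nonneg_right h5 (sq_nonneg t)
      exact mul_le_mul_of_nonneg_right h6 (sq_nonneg (α:ℝ))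
    have e2' : B * K1 * t^2 * (α:ℝ)^2 = K1 * δ^2 := by
      calc B * K1 * t^2 * (α:ℝ)^2 = K1 * (t^2 * ((α:ℝ)^2 * B)) := by ring
        _ = K1 * δ^2 := by rw [ht2]
    have e3' : 4*(α:ℝ)^2*k ≤ K1 * δ^2 := by
      have h7 := mul_le_mul_of_nonneg_right hK1 (sq_nonneg δ)
      calc 4*(α:ℝ)^2*k = 4*(α:ℝ)^2/δ^2 * k * δ^2 := by field_simp
        _ ≤ K1 * δ^2 := h7
    have ha0 : (0:ℝ) < (α:ℝ)^2 := by nlinarith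
    nlinarith [e1', e2', e3', ha0]
  -- conclusion
  show iidProb n p
      {x | δ < |renyiDiv (α:ℝ) (phat x) q - renyiDiv (α:ℝ) p q|} < 0.3
  calc iidProb n p {x | δ < |renyiDiv (α:ℝ) (phat x) q - renyiDiv (α:ℝ) p q|}
      ≤ iidProb n p {x | t^2/k < T x} := iidProb_mono p hp0 hsub
    _ ≤ (∑ x : Fin n → Fin k, (∏ m, p (x m)) * T x)/(t^2/k) := hmarkov
    _ ≤ (1/(n:ℝ))/(t^2/k) := by gcongr
    _ = (k:ℝ)/((n:ℝ)*t^2) := by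
        rw [div_div_eq_mul_div, one_div, inv_mul_eq_div, div_div]
    _ ≤ 1/4 := by
        rw [div_le_div_iff₀ (by positivity) (by norm_num)]
        linarith [hkey]
    _ < 0.3 := by norm_num
end

section
/- Let λ > 0, let N be a Poisson random variable with mean λ, and let a ≥ 1 be an integer. Then E[N^{a̲}] = λ^a and Var[N^{a̲}] ≤ λ^a·((λ+a)^a − λ^a), where N^{a̲} = N(N−1)···(N−a+1) denotes the falling power. -/
open Real

/-- Probability mass function of a Poisson random variable with mean `l`. -/
noncomputable def poissonPMF (l : ℝ) (j : ℕ) : ℝ :=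
  Real.exp (-l) * l ^ j / (Nat.factorial j)

lemma poissonPMF_hasSum (l : ℝ) : HasSum (poissonPMF l) 1 := by
  have h : HasSum (fun j : ℕ => l ^ j / (Nat.factorial j : ℝ)) (Real.exp l) := by
    rw [Real.exp_eq_exp_ℝ]
    exact NormedSpace.expSeries_div_hasSum_exp l
  have := h.mul_left (Real.exp (-l))
  have heq : (fun j : ℕ => Real.exp (-l) * (l ^ j / (Nat.factorial j : ℝ))) = poissonPMF l := by
    funext j; rw [poissonPMF, mul_div_assoc]
  rw [heq, ← Real.exp_add, neg_add_cancel, Real.exp_zero] at this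
  exact this

lemma pmf_shift (l : ℝ) (a n : ℕ) :
    poissonPMF l (n + a) * ((n + a).descFactorial a : ℝ) = l ^ a * poissonPMF l n := by
  have hfac : ((n + a).descFactorial a : ℝ) * (Nat.factorial n : ℝ)
      = ((n + a).factorial : ℝ) := by
    have := Nat.factorial_mul_descFactorial (Nat.le_add_left a n)
    rw [Nat.add_sub_cancel] at this
    exact_mod_cast (by rw [mul_comm] at this; exact this)
  have h1 : (Nat.factorial (n + a) : ℝ) ≠ 0 := Nat.cast_ne_zero.2 (Nat.factorial_ne_zero _)
  have h2 : (Nat.factorial n : ℝ) ≠ 0 := Nat.cast_ne_zero.2 (Nat.factorial_ne_zero _)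
  rw [poissonPMF, poissonPMF, pow_add]
  field_simp
  rw [← hfac]; ring

lemma tsum_shift (a : ℕ) (f : ℕ → ℝ) (h : ∀ j, j < a → f j = 0) :
    ∑' n : ℕ, f (n + a) = ∑' j : ℕ, f j := by
  have hinj : Function.Injective (fun n : ℕ => n + a) := add_left_injective a
  exact hinj.tsum_eq (by
    intro x hx
    have hax : a ≤ x := by
      by_contra hlt
      exact hx (h x (not_le.1 hlt))
    exact ⟨x - a, Nat.sub_add_cancel hax⟩)

lemma summable_shift_iff (a : ℕ) (f : ℕ → ℝ) (h : ∀ j, j < a → f j = 0) :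
    Summable (fun n : ℕ => f (n + a)) ↔ Summable f := by
  have hinj : Function.Injective (fun n : ℕ => n + a) := add_left_injective a
  exact hinj.summable_iff (by
    intro x hx
    by_contra hfx
    exact hx ⟨x - a, Nat.sub_add_cancel (by
      by_contra hlt
      exact hfx (h x (not_le.1 hlt)))⟩)

lemma poisson_desc_summable (l : ℝ) (a : ℕ) :
    Summable (fun j : ℕ => poissonPMF l j * (j.descFactorial a : ℝ)) := by
  rw [← summable_shift_iff a _ (by
    intro j hj
    rw [Nat.descFactorial_eq_zero_iff_lt.2 hj]
    simp)]
  have : (fun n : ℕ => poissonPMF l (n + a) * ((n + a).descFactorial a : ℝ))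
      = fun n => l ^ a * poissonPMF l n := by
    funext n; exact pmf_shift l a n
  rw [this]
  exact (poissonPMF_hasSum l).summable.mul_left _

lemma poisson_desc_mean (l : ℝ) (a : ℕ) :
    ∑' j : ℕ, poissonPMF l j * (j.descFactorial a : ℝ) = l ^ a := by
  rw [← tsum_shift a _ (by
    intro j hj
    rw [Nat.descFactorial_eq_zero_iff_lt.2 hj]
    simp)]
  have : (fun n : ℕ => poissonPMF l (n + a) * ((n + a).descFactorial a : ℝ))
      = fun n => l ^ a * poissonPMF l n := by
    funext n; exact pmf_shift l a n
  rw [this, tsum_mul_left, (poissonPMF_hasSum l).tsum_eq, mul_one]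

lemma desc_vandermonde (n a : ℕ) :
    (n + a).descFactorial a
      = ∑ k ∈ Finset.range (a + 1),
          a.choose k * a.descFactorial (a - k) * n.descFactorial k := by
  rw [Nat.descFactorial_eq_factorial_mul_choose, Nat.add_choose_eq,
    Finset.Nat.sum_antidiagonal_eq_sum_range_succ_mk, Finset.mul_sum]
  refine Finset.sum_congr rfl ?_
  intro k hk
  have hk' : k ≤ a := Nat.lt_succ_iff.1 (Finset.mem_range.1 hk)
  rw [Nat.descFactorial_eq_factorial_mul_choose a (a - k),
    Nat.descFactorial_eq_factorial_mul_choose n k,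
    ← Nat.choose_mul_factorial_mul_factorial hk']
  ring

/-- mean and variance bound for falling powers of a Poisson
random variable. -/
theorem poisson_fallingPower_mean_variance (l : ℝ) (hl : 0 < l)
    (a : ℕ) (ha : 1 ≤ a) :
    (∑' j : ℕ, poissonPMF l j * (j.descFactorial a : ℝ)) = l ^ a ∧
    (∑' j : ℕ, poissonPMF l j * ((j.descFactorial a : ℝ)) ^ 2) -
        (∑' j : ℕ, poissonPMF l j * (j.descFactorial a : ℝ)) ^ 2
      ≤ l ^ a * ((l + a) ^ a - l ^ a) := by
  have hmean := poisson_desc_mean l a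
  refine ⟨hmean, ?_⟩
  -- second moment via shift
  have hsecond : (∑' j : ℕ, poissonPMF l j * ((j.descFactorial a : ℝ)) ^ 2)
      = l ^ a * ∑' n : ℕ, poissonPMF l n * ((n + a).descFactorial a : ℝ) := by
    rw [← tsum_shift a _ (by
      intro j hj
      rw [Nat.descFactorial_eq_zero_iff_lt.2 hj]
      simp)]
    have : (fun n : ℕ => poissonPMF l (n + a) * ((n + a).descFactorial a : ℝ) ^ 2)
        = fun n => l ^ a * (poissonPMF l n * ((n + a).descFactorial a : ℝ)) := by
      funext n
      have := pmf_shift l a n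
      nlinarith [this]
    rw [this, tsum_mul_left]
  -- compute T
  have hT : (∑' n : ℕ, poissonPMF l n * ((n + a).descFactorial a : ℝ))
      = ∑ k ∈ Finset.range (a + 1),
          (a.choose k : ℝ) * (a.descFactorial (a - k) : ℝ) * l ^ k := by
    have hpt : (fun n : ℕ => poissonPMF l n * ((n + a).descFactorial a : ℝ))
        = fun n => ∑ k ∈ Finset.range (a + 1),
            (a.choose k : ℝ) * (a.descFactorial (a - k) : ℝ)
              * (poissonPMF l n * (n.descFactorial k : ℝ)) := by
      funext n
      rw [show ((n + a).descFactorial a : ℝ)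
          = ∑ k ∈ Finset.range (a + 1),
              (a.choose k : ℝ) * (a.descFactorial (a - k) : ℝ) * (n.descFactorial k : ℝ) by
        exact_mod_cast desc_vandermonde n a]
      rw [Finset.mul_sum]
      refine Finset.sum_congr rfl fun k _ => by ring
    rw [hpt, Summable.tsum_finsetSum (fun k _ => (poisson_desc_summable l k).mul_left _)]
    refine Finset.sum_congr rfl fun k _ => ?_
    rw [tsum_mul_left, poisson_desc_mean]
  -- bound T
  have hTle : (∑ k ∈ Finset.range (a + 1),
      (a.choose k : ℝ) * (a.descFactorial (a - k) : ℝ) * l ^ k) ≤ (l + a) ^ a := by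
    rw [add_pow]
    refine Finset.sum_le_sum ?_
    intro k hk
    have hd : (a.descFactorial (a - k) : ℝ) ≤ (a : ℝ) ^ (a - k) := by
      exact_mod_cast Nat.descFactorial_le_pow a (a - k)
    have hlk : (0 : ℝ) ≤ l ^ k := le_of_lt (pow_pos hl k)
    have hc : (0 : ℝ) ≤ (a.choose k : ℝ) := Nat.cast_nonneg _
    calc (a.choose k : ℝ) * (a.descFactorial (a - k) : ℝ) * l ^ k
        ≤ (a.choose k : ℝ) * (a : ℝ) ^ (a - k) * l ^ k := by
          gcongr
      _ = l ^ k * (a : ℝ) ^ (a - k) * (a.choose k : ℝ) := by ring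
  have hla : (0 : ℝ) ≤ l ^ a := le_of_lt (pow_pos hl a)
  rw [hsecond, hmean, hT]
  nlinarith [hTle, hla]
end

section
/- Let α ≥ 2 be an integer, let r be an integer with 0 ≤ r ≤ α−1, and let p be a probability distribution on a set of k symbols. Then Σ_{i=1}^k p_i^{α+r} ≤ k^{(α−1)(α−r)/α} · (Σ_{i=1}^k p_i^α)². -/
open Finset Real

/-- power sum comparison inequality for probability
distributions on `k` symbols. -/
theorem power_sum_ratio_bound (α r : ℕ) (hα : 2 ≤ α) (hr : r ≤ α - 1)
    (k : ℕ) (p : Fin k → ℝ) (hp : (∀ i, 0 ≤ p i) ∧ ∑ i, p i = 1) :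
    ∑ i, p i ^ (α + r)
      ≤ (k : ℝ) ^ (((α : ℝ) - 1) * ((α : ℝ) - r) / (α : ℝ)) *
        (∑ i, p i ^ α) ^ 2 := by
  obtain ⟨hp0, hp1⟩ := hp
  have hk : 0 < k := by
    rcases Nat.eq_zero_or_pos k with h | h
    · subst h; simp at hp1
    · exact h
  have hk' : (0:ℝ) < (k:ℝ) := by exact_mod_cast hk
  have hAnat : (0:ℕ) < α := by omega
  have hA : (0:ℝ) < (α:ℝ) := by exact_mod_cast hAnat
  have hrα : (r:ℝ) ≤ (α:ℝ) := by
    have : r ≤ α := by omega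
    exact_mod_cast this
  set S := ∑ i, p i ^ α with hSdef
  have hSnn : 0 ≤ S := Finset.sum_nonneg fun i _ => pow_nonneg (hp0 i) _
  have hSpos : 0 < S := by
    obtain ⟨i, hi⟩ : ∃ i, p i ≠ 0 := by
      by_contra h
      push_neg at h
      simp [h] at hp1
    have h1 : 0 < p i ^ α := pow_pos ((hp0 i).lt_of_ne (Ne.symm hi)) _
    exact h1.trans_le (Finset.single_le_sum (fun j _ => pow_nonneg (hp0 j) _)
      (Finset.mem_univ i))
  -- Step 1 : ∑ p^(α+r) ≤ S * S^(r/α)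
  have hterm : ∀ i, p i ^ (α + r) ≤ p i ^ α * S ^ ((r:ℝ)/(α:ℝ)) := by
    intro i
    have hle : p i ^ α ≤ S :=
      Finset.single_le_sum (fun j _ => pow_nonneg (hp0 j) _) (Finset.mem_univ i)
    have h2 : p i ^ r = (p i ^ α) ^ ((r:ℝ)/(α:ℝ)) := by
      rw [← Real.rpow_natCast (p i) α, ← Real.rpow_mul (hp0 i),
        ← Real.rpow_natCast (p i) r]
      congr 1
      field_simp
    calc p i ^ (α + r) = p i ^ α * p i ^ r := pow_add _ _ _
      _ = p i ^ α * (p i ^ α) ^ ((r:ℝ)/(α:ℝ)) := by rw [h2]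
      _ ≤ p i ^ α * S ^ ((r:ℝ)/(α:ℝ)) := by
          apply mul_le_mul_of_nonneg_left _ (pow_nonneg (hp0 i) _)
          exact Real.rpow_le_rpow (pow_nonneg (hp0 i) _) hle (by positivity)
  have step1 : ∑ i, p i ^ (α + r) ≤ S * S ^ ((r:ℝ)/(α:ℝ)) := by
    calc ∑ i, p i ^ (α + r) ≤ ∑ i, p i ^ α * S ^ ((r:ℝ)/(α:ℝ)) :=
          Finset.sum_le_sum fun i _ => hterm i
      _ = S * S ^ ((r:ℝ)/(α:ℝ)) := by rw [← Finset.sum_mul]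
  -- Step 2 : S ≥ k^(1-α)  (power mean)
  have hSlower : (k:ℝ) ^ (-((α:ℝ) - 1)) ≤ S := by
    have hpm := pow_sum_div_card_le_sum_pow (s := Finset.univ) (f := p)
      (fun i _ => hp0 i) (α - 1)
    rw [Nat.sub_add_cancel (by omega : 1 ≤ α)] at hpm
    rw [hp1] at hpm
    simp only [Finset.card_univ, Fintype.card_fin, one_pow] at hpm
    have hcast : ((α - 1 : ℕ) : ℝ) = (α:ℝ) - 1 := by
      have := Nat.cast_sub (by omega : 1 ≤ α) (R := ℝ)
      simpa using this
    calc (k:ℝ) ^ (-((α:ℝ) - 1)) = 1 / (k:ℝ) ^ ((α:ℝ) - 1) := by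
          rw [Real.rpow_neg (le_of_lt hk'), one_div]
      _ = 1 / (k:ℝ) ^ (α - 1 : ℕ) := by rw [← Real.rpow_natCast (k:ℝ) (α-1), hcast]
      _ ≤ S := hpm
  -- Step 3 : S^((r-α)/α) ≤ k^e
  have step3 : S ^ (((r:ℝ) - (α:ℝ))/(α:ℝ)) ≤
      (k:ℝ) ^ (((α:ℝ) - 1) * ((α:ℝ) - (r:ℝ)) / (α:ℝ)) := by
    have hz : (((r:ℝ) - (α:ℝ))/(α:ℝ)) ≤ 0 := by
      apply div_nonpos_of_nonpos_of_nonneg _ (le_of_lt hA)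
      linarith
    have hxpos : (0:ℝ) < (k:ℝ) ^ (-((α:ℝ) - 1)) := Real.rpow_pos_of_pos hk' _
    have := Real.rpow_le_rpow_of_nonpos hxpos hSlower hz
    calc S ^ (((r:ℝ) - (α:ℝ))/(α:ℝ))
        ≤ ((k:ℝ) ^ (-((α:ℝ) - 1))) ^ (((r:ℝ) - (α:ℝ))/(α:ℝ)) := this
      _ = (k:ℝ) ^ (-((α:ℝ) - 1) * (((r:ℝ) - (α:ℝ))/(α:ℝ))) := by
          rw [← Real.rpow_mul (le_of_lt hk')]
      _ = (k:ℝ) ^ (((α:ℝ) - 1) * ((α:ℝ) - (r:ℝ)) / (α:ℝ)) := by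
          congr 1
          ring
  -- combine
  have key : S * S ^ ((r:ℝ)/(α:ℝ)) ≤
      (k:ℝ) ^ (((α:ℝ) - 1) * ((α:ℝ) - (r:ℝ)) / (α:ℝ)) * S ^ 2 := by
    have hsplit : S * S ^ ((r:ℝ)/(α:ℝ)) = S ^ (((r:ℝ) - (α:ℝ))/(α:ℝ)) * S ^ 2 := by
      rw [← Real.rpow_natCast S 2, ← Real.rpow_add hSpos,
        show S * S ^ ((r:ℝ)/(α:ℝ)) = S ^ (1 + (r:ℝ)/(α:ℝ)) from by
          rw [Real.rpow_add hSpos, Real.rpow_one]]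
      congr 1
      push_cast
      field_simp
      ring
    rw [hsplit]
    apply mul_le_mul_of_nonneg_right step3 (by positivity)
  calc ∑ i, p i ^ (α + r) ≤ S * S ^ ((r:ℝ)/(α:ℝ)) := step1
    _ ≤ _ := key
end

section
/- Fix a real α with 1 < α ≤ 3. Let p, q be distributions on A = {1,…,k} with p_i > 0 and q_i > 0 for every i, and let δ_1,…,δ_k be reals, not all zero, with |δ_i| ≤ 1/2 for all i and Σ_i p_i δ_i = 0. Set δ = Σ_i p_i |δ_i| and define p'_i = p_i(1 + δ_i). Then p' is a probability distribution on A, d_TV(p, p') = δ/2, and M_α(p',q) ≥ M_α(p,q)·(1 + C₁·δ + C₂·δ²), where C₁ = α · (Σ_i δ_i p_i^α q_i^{1−α}) / (Σ_i p_i^α q_i^{1−α}) · δ^{−1} and C₂ = (α(α−1)/4) · (Σ_i δ_i² p_i^α q_i^{1−α}) / (Σ_i p_i^α q_i^{1−α}) · δ^{−2}. -/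
open Finset Real

/-- Divergence power sum `M_α(p,q)`. -/
noncomputable def divPowerSum {k : ℕ} (α : ℝ) (p q : Fin k → ℝ) : ℝ :=
  ∑ i, p i ^ α * q i ^ (1 - α)

/-- Total variation distance between two distributions on `Fin k`. -/
noncomputable def dTV {k : ℕ} (p p' : Fin k → ℝ) : ℝ :=
  (1/2) * ∑ i, |p i - p' i|


lemma deriv_aux (α : ℝ) {y : ℝ} (hy : 0 < 1 + y) :
    HasDerivAt (fun t : ℝ => (1 + t) ^ α) (α * (1 + y) ^ (α - 1)) y := by
  have h1 : HasDerivAt (fun t : ℝ => 1 + t) 1 y := (hasDerivAt_id y).const_add 1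
  have h2 := (Real.hasDerivAt_rpow_const (x := 1 + y) (p := α) (Or.inl hy.ne')).comp y h1
  rw [mul_one] at h2
  exact h2

lemma key_ineq (α : ℝ) (hα1 : 1 < α) (hα3 : α ≤ 3) {x : ℝ} (hx : |x| ≤ 1/2) :
    1 + α * x + (α * (α - 1) / 4) * x ^ 2 ≤ (1 + x) ^ α := by
  obtain ⟨hxl, hxr⟩ := abs_le.1 hx
  set c : ℝ := α * (α - 1) / 4 with hc
  set g : ℝ → ℝ := fun t => (1 + t) ^ α - α * t - c * t ^ 2 with hg
  set g1 : ℝ → ℝ := fun t => α * (1 + t) ^ (α - 1) - α - 2 * c * t with hg1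
  have hpos : ∀ y : ℝ, -(1/2) ≤ y → (0:ℝ) < 1 + y := fun y hy => by linarith
  have hdg : ∀ y : ℝ, -(1/2) ≤ y → HasDerivAt g (g1 y) y := by
    intro y hy
    have := ((deriv_aux α (hpos y hy)).sub
      ((hasDerivAt_id y).const_mul α)).sub
      (((hasDerivAt_id y).pow 2).const_mul c)
    simp only [hg, hg1]
    refine this.congr_deriv ?_
    simp; ring
  have hdg1 : ∀ y : ℝ, -(1/2) ≤ y →
      HasDerivAt g1 (α * ((α - 1) * (1 + y) ^ (α - 2)) - 2 * c) y := by
    intro y hy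
    have h1 : HasDerivAt (fun t : ℝ => (1 + t) ^ (α - 1)) ((α - 1) * (1 + y) ^ (α - 1 - 1)) y :=
      deriv_aux (α - 1) (hpos y hy)
    have := ((h1.const_mul α).sub_const α).sub (((hasDerivAt_id y).const_mul (2 * c)))
    simp only [hg1]
    refine this.congr_deriv ?_
    rw [show α - 1 - 1 = α - 2 by ring]; ring
  -- second derivative nonneg on Icc
  have hg2 : ∀ y : ℝ, y ∈ Set.Icc (-(1/2) : ℝ) (1/2) →
      0 ≤ α * ((α - 1) * (1 + y) ^ (α - 2)) - 2 * c := by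
    intro y hy
    have h12 : (1/2 : ℝ) ≤ (1 + y) ^ (α - 2) := by
      rcases le_or_gt 2 α with h2 | h2
      · have hb : (1/2 : ℝ) ≤ 1 + y := by linarith [hy.1]
        calc (1/2:ℝ) = (1/2 : ℝ) ^ (1:ℝ) := by rw [Real.rpow_one]
        _ ≤ (1/2 : ℝ) ^ (α - 2) := Real.rpow_le_rpow_of_exponent_ge (by norm_num) (by norm_num)
            (by linarith)
        _ ≤ (1 + y) ^ (α - 2) := Real.rpow_le_rpow (by norm_num) hb (by linarith)
      · have hb : 1 + y ≤ 3/2 := by linarith [hy.2]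
        calc (1/2:ℝ) ≤ (3/2 : ℝ) ^ (-1 : ℝ) := by
              rw [Real.rpow_neg_one]; norm_num
        _ ≤ (3/2 : ℝ) ^ (α - 2) := Real.rpow_le_rpow_of_exponent_le (by norm_num) (by linarith)
        _ ≤ (1 + y) ^ (α - 2) := Real.rpow_le_rpow_of_nonpos (hpos y hy.1) hb (by linarith)
    have hαα : 0 < α * (α - 1) := by nlinarith
    have : α * (α - 1) / 2 ≤ α * (α - 1) * (1 + y) ^ (α - 2) := by
      calc α * (α - 1) / 2 = α * (α - 1) * (1/2) := by ring
      _ ≤ α * (α - 1) * (1 + y) ^ (α - 2) := by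
          exact mul_le_mul_of_nonneg_left h12 hαα.le
    simp only [hc]; nlinarith
  -- g1 is monotone on Icc
  have hIcc : Convex ℝ (Set.Icc (-(1/2):ℝ) (1/2)) := convex_Icc _ _
  have hmono1 : MonotoneOn g1 (Set.Icc (-(1/2):ℝ) (1/2)) := by
    apply monotoneOn_of_deriv_nonneg hIcc
    · exact fun y hy => (hdg1 y hy.1).continuousAt.continuousWithinAt
    · intro y hy
      rw [interior_Icc] at hy
      exact (hdg1 y hy.1.le).differentiableAt.differentiableWithinAt
    · intro y hy
      rw [interior_Icc] at hy
      rw [(hdg1 y hy.1.le).deriv]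
      exact hg2 y ⟨hy.1.le, hy.2.le⟩
  have hg1zero : g1 0 = 0 := by simp [hg1]
  have hg0 : g 0 = 1 := by simp [hg]
  have key : g 0 ≤ g x := by
    rcases le_or_gt 0 x with h0 | h0
    · have hmonog : MonotoneOn g (Set.Icc (0:ℝ) (1/2)) := by
        apply monotoneOn_of_deriv_nonneg (convex_Icc _ _)
        · exact fun y hy => (hdg y (by linarith [hy.1])).continuousAt.continuousWithinAt
        · intro y hy
          rw [interior_Icc] at hy
          exact (hdg y (by linarith [hy.1])).differentiableAt.differentiableWithinAt
        · intro y hy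
          rw [interior_Icc] at hy
          rw [(hdg y (by linarith [hy.1])).deriv, ← hg1zero]
          exact hmono1 (by constructor <;> norm_num) ⟨by linarith [hy.1], hy.2.le⟩ hy.1.le
      exact hmonog (by constructor <;> norm_num) ⟨h0, hxr⟩ h0
    · have hantig : AntitoneOn g (Set.Icc (-(1/2):ℝ) 0) := by
        apply antitoneOn_of_deriv_nonpos (convex_Icc _ _)
        · exact fun y hy => (hdg y hy.1).continuousAt.continuousWithinAt
        · intro y hy
          rw [interior_Icc] at hy
          exact (hdg y hy.1.le).differentiableAt.differentiableWithinAt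
        · intro y hy
          rw [interior_Icc] at hy
          rw [(hdg y hy.1.le).deriv, ← hg1zero]
          exact hmono1 ⟨hy.1.le, by linarith [hy.2]⟩ (by constructor <;> norm_num) hy.2.le
      exact hantig ⟨hxl, h0.le⟩ (by constructor <;> norm_num) h0.le
  rw [hg0] at key
  simp only [hg] at key
  linarith

/-- perturbing `p` by relative deviations `δᵢ` produces a
nearby distribution whose divergence power sum is noticeably larger. -/
theorem perturbation_powerSum_increase (α : ℝ) (hα1 : 1 < α) (hα3 : α ≤ 3)
    (k : ℕ) (p q : Fin k → ℝ) (hp : IsDist p) (hq : IsDist q)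
    (hppos : ∀ i, 0 < p i) (hqpos : ∀ i, 0 < q i)
    (dv : Fin k → ℝ) (hdv0 : dv ≠ 0) (hdv : ∀ i, |dv i| ≤ 1/2)
    (hmean : ∑ i, p i * dv i = 0)
    (δ C₁ C₂ : ℝ) (hδ : δ = ∑ i, p i * |dv i|)
    (hC₁ : C₁ = α * (∑ i, dv i * p i ^ α * q i ^ (1 - α)) /
                  (∑ i, p i ^ α * q i ^ (1 - α)) / δ)
    (hC₂ : C₂ = (α * (α - 1) / 4) * (∑ i, (dv i) ^ 2 * p i ^ α * q i ^ (1 - α)) /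
                  (∑ i, p i ^ α * q i ^ (1 - α)) / δ ^ 2) :
    IsDist (fun i => p i * (1 + dv i)) ∧
    dTV p (fun i => p i * (1 + dv i)) = δ / 2 ∧
    divPowerSum α p q * (1 + C₁ * δ + C₂ * δ ^ 2)
      ≤ divPowerSum α (fun i => p i * (1 + dv i)) q := by
  have hdvboth : ∀ i, -(1/2 : ℝ) ≤ dv i ∧ dv i ≤ 1/2 := fun i => by
    have := abs_le.1 (hdv i); exact ⟨by linarith [this.1], this.2⟩
  have h1dv : ∀ i, (0:ℝ) < 1 + dv i := fun i => by linarith [(hdvboth i).1]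
  -- δ > 0
  obtain ⟨i₀, hi₀⟩ := Function.ne_iff.1 hdv0
  have hδpos : 0 < δ := by
    rw [hδ]
    apply Finset.sum_pos' (fun i _ => mul_nonneg (hppos i).le (abs_nonneg _))
    exact ⟨i₀, Finset.mem_univ _, mul_pos (hppos i₀) (abs_pos.2 hi₀)⟩
  have hδ0 : δ ≠ 0 := hδpos.ne'
  -- positivity of weights
  have hw : ∀ i, (0:ℝ) < p i ^ α * q i ^ (1 - α) := fun i =>
    mul_pos (Real.rpow_pos_of_pos (hppos i) _) (Real.rpow_pos_of_pos (hqpos i) _)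
  have hS0 : (0:ℝ) < ∑ i, p i ^ α * q i ^ (1 - α) :=
    Finset.sum_pos (fun i _ => hw i) ⟨i₀, Finset.mem_univ i₀⟩
  refine ⟨⟨fun i => mul_nonneg (hppos i).le (h1dv i).le, ?_⟩, ?_, ?_⟩
  · have : ∑ i, p i * (1 + dv i) = (∑ i, p i) + ∑ i, p i * dv i := by
      rw [← Finset.sum_add_distrib]; apply Finset.sum_congr rfl; intro i _; ring
    rw [this, hp.2, hmean, add_zero]
  · unfold dTV
    have : ∀ i : Fin k, |p i - p i * (1 + dv i)| = p i * |dv i| := fun i => by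
      rw [show p i - p i * (1 + dv i) = -(p i * dv i) by ring, abs_neg, abs_mul,
        abs_of_pos (hppos i)]
    simp only [this]
    rw [← hδ]; ring
  · set S0 := ∑ i, p i ^ α * q i ^ (1 - α) with hS0d
    set S1 := ∑ i, dv i * p i ^ α * q i ^ (1 - α) with hS1d
    set S2 := ∑ i, (dv i) ^ 2 * p i ^ α * q i ^ (1 - α) with hS2d
    have hL : divPowerSum α p q * (1 + C₁ * δ + C₂ * δ ^ 2)
        = S0 + α * S1 + (α * (α - 1) / 4) * S2 := by
      rw [hC₁, hC₂]
      show S0 * _ = _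
      field_simp
    rw [hL]
    have hR : divPowerSum α (fun i => p i * (1 + dv i)) q
        = ∑ i, (1 + dv i) ^ α * (p i ^ α * q i ^ (1 - α)) := by
      unfold divPowerSum
      apply Finset.sum_congr rfl; intro i _
      rw [Real.mul_rpow (hppos i).le (h1dv i).le]; ring
    rw [hR]
    have hsum : S0 + α * S1 + (α * (α - 1) / 4) * S2
        = ∑ i, (1 + α * dv i + (α * (α - 1) / 4) * (dv i) ^ 2) * (p i ^ α * q i ^ (1 - α)) := by
      rw [hS0d, hS1d, hS2d, Finset.mul_sum, Finset.mul_sum, ← Finset.sum_add_distrib,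
        ← Finset.sum_add_distrib]
      apply Finset.sum_congr rfl; intro i _; ring
    rw [hsum]
    apply Finset.sum_le_sum
    intro i _
    exact mul_le_mul_of_nonneg_right (key_ineq α hα1 hα3 (hdv i)) (hw i).le
end
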